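/- Let $k$ be a finite field with $q$ elements, and let $\chi$ and $\eta$ be nontrivial multiplicative characters of $k^\times$ with values in $\mathbb{C}$ (extended by $\chi(0)=\eta(0)=0$). Define $g(\chi,\eta;k)=\sum_{u\in k}\sum_{v\in k}\chi(u)\overline{\chi}(u+1)\overline{\chi}(v)\chi(v+1)\eta(uv-1)$. Then $g(\chi,\eta;k)=\frac{\eta(-1)}{q-1}\sum_{\rho} J(\rho,\eta)\,J(\rho,\overline{\chi})\,J(\rho,\chi)$, where the sum runs over all multiplicative characters $\rho$ of $k^\times$ (including the trivial one) and $J$ denotes the Jacobi sum. -/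

import Mathlib

attribute [local instance] Fintype.ofFinite

section Aux

variable {k : Type*} [Field k] [Fintype k]

private lemma hasEnough : HasEnoughRootsOfUnity ℂ (Monoid.exponent kˣ) := by
  haveI : NeZero ((Monoid.exponent kˣ : ℂ)) :=
    ⟨Nat.cast_ne_zero.mpr Monoid.exponent_ne_zero_of_finite⟩
  infer_instance

open scoped Classical in
/-- Orthogonality: the sum of `ρ x` over all multiplicative characters. -/
private lemma sum_mulChar_apply (x : k) :
    ∑ ρ : MulChar k ℂ, ρ x = if x = 1 then ((Fintype.card k : ℂ) - 1) else 0 := by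
  classical
  haveI := hasEnough (k := k)
  split_ifs with hx
  · subst hx
    simp only [map_one, Finset.sum_const, Finset.card_univ, nsmul_eq_mul, mul_one]
    have h := MulChar.card_eq_card_units_of_hasEnoughRootsOfUnity k ℂ
    rw [Nat.card_eq_fintype_card, Nat.card_units] at h
    rw [h]
    have h2 : (1 : ℕ) ≤ Nat.card k := Nat.card_pos
    rw [Nat.card_eq_fintype_card] at *
    push_cast [Nat.cast_sub h2]
    ring
  · by_cases hu : IsUnit x
    · obtain ⟨ρ₀, hρ₀⟩ := MulChar.exists_apply_ne_one_of_hasEnoughRootsOfUnity k ℂ hx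
      refine eq_zero_of_mul_eq_self_left hρ₀ ?_
      simp only [Finset.mul_sum, ← MulChar.mul_apply]
      exact Fintype.sum_bijective _ (Group.mulLeft_bijective ρ₀) _ _ fun ρ ↦ rfl
    · exact Finset.sum_eq_zero fun ρ _ ↦ ρ.map_nonunit hu

/-- conjugate of `χ x⁻¹` is `χ x`. -/
private lemma conj_apply_inv (χ : MulChar k ℂ) (x : k) :
    (starRingEnd ℂ) (χ x⁻¹) = χ x := by
  rw [← MulChar.inv_apply']
  rw [show (starRingEnd ℂ) (χ⁻¹ x) = star (χ⁻¹ x) from rfl, MulChar.star_apply', inv_inv]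

private lemma conj_apply (χ : MulChar k ℂ) (x : k) :
    (starRingEnd ℂ) (χ x) = χ x⁻¹ := by
  have h := conj_apply_inv χ x⁻¹
  rwa [inv_inv] at h

end Aux

open Finset in
/-- The Conrey–Iwaniec sum as an average of triple products of Jacobi sums:
`g(χ,η;k) = η(-1)/(q-1) ∑_ρ J(ρ,η) J(ρ,χ̄) J(ρ,χ)`, the sum running over all
multiplicative characters `ρ` of `kˣ` (including the trivial one). -/
theorem conrey_iwaniec_sum_eq_jacobiSum_avg
    (k : Type*) [Field k] [Fintype k] (q : ℕ) (hq : Fintype.card k = q)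
    (χ η : MulChar k ℂ) (hχ : χ ≠ 1) (hη : η ≠ 1) :
    ∑ u : k, ∑ v : k,
        χ u * (starRingEnd ℂ) (χ (u + 1)) * (starRingEnd ℂ) (χ v) * χ (v + 1)
          * η (u * v - 1)
      = η (-1) / ((q : ℂ) - 1) *
          ∑ ρ : MulChar k ℂ,
            (∑ α : k, ρ α * η (1 - α)) * (∑ α : k, ρ α * (starRingEnd ℂ) (χ (1 - α)))
              * (∑ α : k, ρ α * χ (1 - α)) := by
  classical
  have hq2 : (1 : ℕ) < q := hq ▸ Fintype.one_lt_card
  have hq0 : (q : ℂ) - 1 ≠ 0 := by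
    have : (q : ℂ) ≠ 1 := by exact_mod_cast hq2.ne'
    intro h
    exact this (sub_eq_zero.mp h)
  set g : k → k → ℂ := fun b c =>
    if b * c = 0 then 0 else η (1 - (b * c)⁻¹) * (starRingEnd ℂ) (χ (1 - b)) * χ (1 - c)
    with hg
  -- Step A: the character sum equals (q-1) * ∑ b c, g b c
  have stepA : ∑ ρ : MulChar k ℂ,
      (∑ α : k, ρ α * η (1 - α)) * (∑ α : k, ρ α * (starRingEnd ℂ) (χ (1 - α)))
        * (∑ α : k, ρ α * χ (1 - α))
      = ((q : ℂ) - 1) * ∑ b : k, ∑ c : k, g b c := by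
    have expand : ∀ ρ : MulChar k ℂ,
        (∑ α : k, ρ α * η (1 - α)) * (∑ α : k, ρ α * (starRingEnd ℂ) (χ (1 - α)))
          * (∑ α : k, ρ α * χ (1 - α))
        = ∑ a : k, ∑ b : k, ∑ c : k,
            ρ (a * b * c) * (η (1 - a) * (starRingEnd ℂ) (χ (1 - b)) * χ (1 - c)) := by
      intro ρ
      rw [Finset.sum_mul_sum, Finset.sum_mul]
      refine sum_congr rfl fun a _ => ?_
      rw [Finset.sum_mul]
      refine sum_congr rfl fun b _ => ?_
      rw [Finset.mul_sum]
      refine sum_congr rfl fun c _ => ?_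
      rw [map_mul, map_mul]
      ring
    calc ∑ ρ : MulChar k ℂ, (∑ α : k, ρ α * η (1 - α)) *
            (∑ α : k, ρ α * (starRingEnd ℂ) (χ (1 - α))) * (∑ α : k, ρ α * χ (1 - α))
        = ∑ a : k, ∑ b : k, ∑ c : k, (∑ ρ : MulChar k ℂ, ρ (a * b * c)) *
            (η (1 - a) * (starRingEnd ℂ) (χ (1 - b)) * χ (1 - c)) := by
          simp only [expand]
          rw [Finset.sum_comm]
          refine sum_congr rfl fun a _ => ?_
          rw [Finset.sum_comm]
          refine sum_congr rfl fun b _ => ?_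
          rw [Finset.sum_comm]
          exact sum_congr rfl fun c _ => (Finset.sum_mul _ _ _).symm
      _ = ∑ b : k, ∑ c : k, ∑ a : k, (∑ ρ : MulChar k ℂ, ρ (a * b * c)) *
            (η (1 - a) * (starRingEnd ℂ) (χ (1 - b)) * χ (1 - c)) := by
          rw [Finset.sum_comm]
          exact sum_congr rfl fun b _ => Finset.sum_comm
      _ = ∑ b : k, ∑ c : k, ((q : ℂ) - 1) * g b c := by
          refine sum_congr rfl fun b _ => sum_congr rfl fun c _ => ?_
          by_cases hbc : b * c = 0
          · rw [hg]
            simp only [if_pos hbc, mul_zero]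
            refine Finset.sum_eq_zero fun a _ => ?_
            rw [sum_mulChar_apply, if_neg, zero_mul]
            rw [mul_assoc, hbc, mul_zero]
            exact zero_ne_one
          · rw [Finset.sum_eq_single ((b * c)⁻¹)]
            · rw [sum_mulChar_apply, if_pos (by rw [mul_assoc]; exact inv_mul_cancel₀ hbc), hq, hg]
              simp only [if_neg hbc]
              try ring
            · intro a _ ha
              rw [sum_mulChar_apply, if_neg, zero_mul]
              intro h
              exact ha (eq_inv_of_mul_eq_one_left (by rw [← mul_assoc]; exact h))
            · exact fun h => absurd (Finset.mem_univ _) h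
      _ = ((q : ℂ) - 1) * ∑ b : k, ∑ c : k, g b c := by
          rw [Finset.mul_sum]
          exact sum_congr rfl fun b _ => (Finset.mul_sum _ _ _).symm
  rw [stepA]
  rw [show η (-1) / ((q : ℂ) - 1) * (((q : ℂ) - 1) * ∑ b : k, ∑ c : k, g b c)
      = η (-1) * ∑ b : k, ∑ c : k, g b c by field_simp <;> ring]
  -- Step B: reindex via the involution x ↦ -x⁻¹
  have he : Function.Involutive (fun x : k => -x⁻¹) := fun x => by
    simp [inv_neg, inv_inv]
  have reindex : ∀ F : k → ℂ, ∑ b : k, F b = ∑ u : k, F (-u⁻¹) := by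
    intro F
    refine (Fintype.sum_equiv he.toPerm _ F fun x => ?_).symm
    simp [Function.Involutive.coe_toPerm]
  rw [Finset.mul_sum, reindex fun b => η (-1) * ∑ c : k, g b c]
  refine sum_congr rfl fun u _ => ?_
  rw [Finset.mul_sum, reindex fun c => η (-1) * g (-u⁻¹) c]
  refine sum_congr rfl fun v _ => ?_
  -- pointwise identity
  by_cases hu : u = 0
  · subst hu
    simp [hg, MulChar.map_zero]
  by_cases hv : v = 0
  · subst hv
    simp [hg, MulChar.map_zero]
  have hbc : (-u⁻¹) * (-v⁻¹) = (u * v)⁻¹ := by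
    rw [neg_mul_neg, mul_inv]
  have huv : u * v ≠ 0 := mul_ne_zero hu hv
  rw [hg]
  simp only [hbc, if_neg (inv_ne_zero huv), inv_inv]
  have h1 : (1 : k) - (-u⁻¹) = (u + 1) * u⁻¹ := by field_simp; ring
  have h2 : (1 : k) - (-v⁻¹) = (v + 1) * v⁻¹ := by field_simp; ring
  have h3 : η (u * v - 1) = η (-1) * η (1 - u * v) := by
    rw [← map_mul]; congr 1; ring
  rw [h1, h2, map_mul, map_mul χ, map_mul (starRingEnd ℂ), conj_apply_inv,
    conj_apply χ v, h3]
  ring
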